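/- Let G be a graph with a Hamiltonian cycle and let v be a vertex of G. Replace v by four new vertices forming a complete graph K4, and join each former neighbor of v to some vertex of the K4 (possibly several neighbors to the same new vertex, with the two cycle-neighbors of v attached to distinct new vertices). Then the resulting graph has a Hamiltonian cycle. -/

import Mathlib

/-- The graph obtained from `G` by replacing the vertex `v` with a clique `K₄`,
where every former neighbour `a` of `v` is attached to the clique vertex `f a`
(possibly several neighbours to the same clique vertex). -/
def blowupK4 {V : Type*} (G : SimpleGraph V) (v : V) (f : V → Fin 4) :
    SimpleGraph ({u : V // u ≠ v} ⊕ Fin 4) where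
  Adj x y :=
    match x, y with
    | .inl a, .inl b => G.Adj a.1 b.1
    | .inl a, .inr i => G.Adj a.1 v ∧ f a.1 = i
    | .inr i, .inl a => G.Adj a.1 v ∧ f a.1 = i
    | .inr i, .inr j => i ≠ j
  symm := by
    constructor
    rintro (a | i) (b | j) h
    · exact h.symm
    · exact h
    · exact h
    · exact h.symm
  loopless := by
    constructor
    rintro (a | i) h
    · exact G.irrefl h
    · exact h rfl

/-- A count function pinned to `DecidableEq`, avoiding `BEq` instance mismatches. -/
def cnt {α : Type*} [DecidableEq α] (a : α) : List α → ℕ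
  | [] => 0
  | b :: l => (if a = b then 1 else 0) + cnt a l

lemma cnt_eq_count {α : Type*} [DecidableEq α] (a : α) : ∀ l : List α, cnt a l = l.count a
  | [] => rfl
  | b :: l => by
      rw [List.count_cons, cnt, cnt_eq_count a l]
      have hb : (a == b) = decide (a = b) := rfl
      by_cases h : a = b
      · simp [h, hb]
        omega
      · simp [h, hb]
        exact fun h' => h h'.symm

lemma cnt_append {α : Type*} [DecidableEq α] (a : α) :
    ∀ l1 l2 : List α, cnt a (l1 ++ l2) = cnt a l1 + cnt a l2
  | [], l2 => by simp [cnt]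
  | b :: l1, l2 => by simp [cnt, cnt_append a l1 l2]; omega

lemma cnt_eq_zero {α : Type*} [DecidableEq α] {a : α} :
    ∀ {l : List α}, cnt a l = 0 ↔ a ∉ l
  | [] => by simp [cnt]
  | b :: l => by
      by_cases h : a = b <;> simp [cnt, h, cnt_eq_zero (l := l)]

open SimpleGraph Walk in
def liftAvoid {V : Type*} (G : SimpleGraph V) (v : V) (f : V → Fin 4) :
    ∀ {a b : V} (w : G.Walk a b) (ha : a ≠ v) (hb : b ≠ v)
      (_h : ∀ x ∈ w.support, x ≠ v),
      (blowupK4 G v f).Walk (Sum.inl ⟨a, ha⟩) (Sum.inl ⟨b, hb⟩)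
  | _, _, .nil, _, _, _ => .nil
  | _, _, @SimpleGraph.Walk.cons _ _ a c b hadj w, ha, hb, h =>
      Walk.cons
        (show (blowupK4 G v f).Adj (Sum.inl ⟨a, ha⟩) (Sum.inl ⟨c, h c (by simp)⟩) from hadj)
        (liftAvoid G v f w (h c (by simp)) hb (fun x hx => h x (by simp [hx])))

open SimpleGraph Walk in
lemma liftAvoid_cnt_inl {V : Type*} [DecidableEq V] (G : SimpleGraph V) (v : V)
    (f : V → Fin 4) :
    ∀ {a b : V} (w : G.Walk a b) (ha : a ≠ v) (hb : b ≠ v) (h : ∀ x ∈ w.support, x ≠ v)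
      (x : {u : V // u ≠ v}),
      cnt (Sum.inl x) (liftAvoid G v f w ha hb h).support = cnt x.1 w.support
  | a', _, .nil, ha, hb, h, x => by
      show cnt (Sum.inl x) ([Sum.inl ⟨a', ha⟩] : List ({u : V // u ≠ v} ⊕ Fin 4)) = cnt x.1 [a']
      simp [cnt, Subtype.ext_iff]
  | _, _, @SimpleGraph.Walk.cons _ _ a c b hadj w, ha, hb, h, x => by
      show cnt (Sum.inl x) (Sum.inl ⟨a, ha⟩ :: (liftAvoid G v f w _ hb _).support)
          = cnt x.1 (a :: w.support)
      rw [cnt, cnt, liftAvoid_cnt_inl G v f w _ _ _ x]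
      congr 1
      simp [Subtype.ext_iff]

open SimpleGraph Walk in
lemma liftAvoid_support_not_inr {V : Type*} [DecidableEq V] (G : SimpleGraph V) (v : V)
    (f : V → Fin 4) :
    ∀ {a b : V} (w : G.Walk a b) (ha : a ≠ v) (hb : b ≠ v) (h : ∀ x ∈ w.support, x ≠ v)
      (i : Fin 4), Sum.inr i ∉ (liftAvoid G v f w ha hb h).support
  | a', _, .nil, ha, hb, h, i => by
      show Sum.inr i ∉ ([Sum.inl ⟨a', ha⟩] : List ({u : V // u ≠ v} ⊕ Fin 4))
      simp
  | _, _, @SimpleGraph.Walk.cons _ _ a c b hadj w, ha, hb, h, i => by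
      show Sum.inr i ∉ Sum.inl ⟨a, ha⟩ :: (liftAvoid G v f w _ hb _).support
      simp only [List.mem_cons]
      rintro (h' | h')
      · exact absurd h' (by simp)
      · exact liftAvoid_support_not_inr G v f w _ _ _ i h'

/-- Let `G` be a graph with a Hamiltonian cycle and `v` a vertex of `G`.  Replace `v`
by four new vertices forming a `K₄`, joining each former neighbour `a` of `v` to the
clique vertex `f a` (possibly several neighbours to the same new vertex), in such a way
that the two neighbours of `v` on the Hamiltonian cycle are attached to distinct new
vertices.  Then the resulting graph has a Hamiltonian cycle. -/
theorem blowupK4_isHamiltonian_of_cycle {V : Type*} [Fintype V] [DecidableEq V]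
    (G : SimpleGraph V) (v : V) (f : V → Fin 4)
    (p : G.Walk v v) (hp : p.IsHamiltonianCycle)
    (hends : f (p.getVert 1) ≠ f (p.getVert (p.length - 1))) :
    (blowupK4 G v f).IsHamiltonian := by
  intro _hcard
  cases p with
  | nil => exact absurd rfl hp.isCycle.ne_nil
  | cons hva q =>
    rename_i a
    cases q with
    | nil => exact absurd hva G.irrefl
    | cons hab q2 =>
      obtain ⟨x, r, hxv, hq⟩ := SimpleGraph.Walk.exists_cons_eq_concat hab q2
      rw [hq] at hp hends
      have hav : a ≠ v := hva.ne'
      have hxvne : x ≠ v := hxv.ne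
      have h1 : (SimpleGraph.Walk.cons hva (r.concat hxv)).getVert 1 = a := by
        simp [SimpleGraph.Walk.getVert_cons_succ]
      have h2 : (SimpleGraph.Walk.cons hva (r.concat hxv)).getVert
          ((SimpleGraph.Walk.cons hva (r.concat hxv)).length - 1) = x := by
        simp [SimpleGraph.Walk.length_cons, SimpleGraph.Walk.length_concat,
          SimpleGraph.Walk.getVert_cons_succ, SimpleGraph.Walk.concat_eq_append,
          SimpleGraph.Walk.getVert_append]
      rw [h1, h2] at hends
      have hcnt0 := (SimpleGraph.Walk.isHamiltonianCycle_iff_isCycle_and_support_count_tail_eq_one.mp hp).2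
      have hsupp : (SimpleGraph.Walk.cons hva (r.concat hxv)).support.tail
          = r.support ++ [v] := by simp
      have hcnt : ∀ y, cnt y (r.support ++ [v]) = 1 := fun y => by
        rw [cnt_eq_count, ← hsupp]; exact hcnt0 y
      have hvnot : v ∉ r.support := by
        have h := hcnt v
        rw [cnt_append] at h
        simp [cnt] at h
        exact cnt_eq_zero.mp h
      have hrcnt : ∀ y, y ≠ v → cnt y r.support = 1 := fun y hy => by
        have h := hcnt y
        rw [cnt_append] at h
        simpa [cnt, hy] using h
      have havoid : ∀ z ∈ r.support, z ≠ v := fun z hz hzv => hvnot (hzv ▸ hz)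
      obtain ⟨j3, j4, h23, h34, h41, h13, h14, h24, hcover⟩ :=
        (by decide : ∀ i1 i2 : Fin 4, i1 ≠ i2 → ∃ j3 j4 : Fin 4,
          i2 ≠ j3 ∧ j3 ≠ j4 ∧ j4 ≠ i1 ∧ i1 ≠ j3 ∧ i1 ≠ j4 ∧ i2 ≠ j4 ∧
          ∀ i : Fin 4, i = i1 ∨ i = i2 ∨ i = j3 ∨ i = j4) (f a) (f x) hends
      set W1 := liftAvoid G v f r hav hxvne havoid with hW1
      have hB : (blowupK4 G v f).Adj (Sum.inl ⟨x, hxvne⟩) (Sum.inr (f x)) := ⟨hxv, rfl⟩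
      have hC : (blowupK4 G v f).Adj (Sum.inr (f x)) (Sum.inr j3) := h23
      have hD : (blowupK4 G v f).Adj (Sum.inr j3) (Sum.inr j4) := h34
      have hE : (blowupK4 G v f).Adj (Sum.inr j4) (Sum.inr (f a)) := h41
      have hA : (blowupK4 G v f).Adj (Sum.inr (f a)) (Sum.inl ⟨a, hav⟩) := ⟨hva.symm, rfl⟩
      set t : (blowupK4 G v f).Walk (Sum.inl ⟨x, hxvne⟩) (Sum.inr (f a)) :=
        .cons hB (.cons hC (.cons hD (.cons hE .nil))) with ht
      set W := W1.append t with hW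
      refine ⟨Sum.inr (f a), .cons hA W, ?_⟩
      rw [SimpleGraph.Walk.isHamiltonianCycle_iff_isCycle_and_support_count_tail_eq_one]
      have hWsupp : W.support = W1.support
          ++ [Sum.inr (f x), Sum.inr j3, Sum.inr j4, Sum.inr (f a)] := by
        rw [hW, SimpleGraph.Walk.support_append, ht]
        simp
      have hW1cnt : ∀ y, cnt y W1.support ≤ 1 := by
        rintro (z | i)
        · rw [hW1, liftAvoid_cnt_inl]
          have h := hcnt z.1
          rw [cnt_append] at h
          omega
        · rw [hW1, cnt_eq_zero.mpr (liftAvoid_support_not_inr G v f r _ _ _ i)]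
          omega
      have hW1nodup : W1.support.Nodup := by
        rw [@List.nodup_iff_count_le_one _ instBEqOfDecidableEq]
        intro y
        rw [← cnt_eq_count]
        exact hW1cnt y
      constructor
      · rw [SimpleGraph.Walk.cons_isCycle_iff]
        constructor
        · rw [SimpleGraph.Walk.isPath_def, hWsupp]
          refine hW1nodup.append ?_ ?_
          · simp [List.nodup_cons, h23, h34, Ne.symm hends, Ne.symm h13, Ne.symm h14, h24]
          · intro y hy1 hy2
            simp only [List.mem_cons, List.mem_singleton, List.not_mem_nil, or_false] at hy2
            rcases hy2 with rfl | rfl | rfl | rfl <;>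
              exact liftAvoid_support_not_inr G v f r _ _ _ _ (hW1 ▸ hy1)
        · intro he
          rw [hW, SimpleGraph.Walk.edges_append] at he
          rcases List.mem_append.mp he with h' | h'
          · have hmem := SimpleGraph.Walk.fst_mem_support_of_mem_edges _ h'
            rw [hW1] at hmem
            exact liftAvoid_support_not_inr G v f r _ _ _ _ hmem
          · rw [ht] at h'
            simp only [SimpleGraph.Walk.edges_cons, SimpleGraph.Walk.edges_nil,
              List.mem_cons, List.not_mem_nil, or_false] at h'
            rcases h' with h' | h' | h' | h' <;> rw [Sym2.eq_iff] at h' <;>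
              simp_all
      · intro y
        rw [SimpleGraph.Walk.support_cons, List.tail_cons, ← cnt_eq_count, hWsupp, cnt_append]
        match y with
        | Sum.inl z =>
          rw [hW1, liftAvoid_cnt_inl]
          have hz := hrcnt z.1 z.2
          simp [cnt]
          omega
        | Sum.inr i =>
          rw [hW1, cnt_eq_zero.mpr (liftAvoid_support_not_inr G v f r _ _ _ i)]
          rcases hcover i with rfl | rfl | rfl | rfl <;>
            simp [cnt, hends, Ne.symm hends, h23, Ne.symm h23, h34, Ne.symm h34,
              h41, Ne.symm h41, h13, Ne.symm h13, h14, Ne.symm h14, h24, Ne.symm h24]
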